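/- For every weight vector v ∈ ℝ^N and every strategy y ∈ {1,…,n}: E_{π°}[ Δ̂'_{v,y}(X) ] = Σ_{i=1}^N ( d̂°_{v,i} − (1−u)·b̂°_{v,i} ) · d/dδ|_{δ=0} P_{π_δ}[X_i = y]. -/

import Mathlib

open Finset

namespace SCT

abbrev Event (N : ℕ) := Finset (Fin N) × (Fin N → Fin N)

/-- The extension `α̃` of the parentage map of a replacement event:
it equals `α` on `R` and the identity off `R`. -/
def extMap {N : ℕ} (E : Event N) : Fin N → Fin N :=
  fun i => if i ∈ E.1 then E.2 i else i

/-- Transition probabilities of the mutation–selection Markov chain on states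
`Fin N → Fin n`, for a replacement rule `p` and mutation probability `u`. -/
noncomputable def transMat (N n : ℕ) (p : Event N → ℝ) (u : ℝ)
    (x y : Fin N → Fin n) : ℝ :=
  ∑ E : Event N, p E *
    (∏ i ∈ E.1, ((1 - u) * (if y i = x (E.2 i) then (1:ℝ) else 0) + u / (n:ℝ))) *
    (∏ i ∈ E.1ᶜ, (if y i = x i then (1:ℝ) else 0))

def IsDist {α : Type*} [Fintype α] (q : α → ℝ) : Prop :=
  (∀ a, 0 ≤ q a) ∧ ∑ a, q a = 1

def IsStationary {N n : ℕ} (P : (Fin N → Fin n) → (Fin N → Fin n) → ℝ)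
    (π : (Fin N → Fin n) → ℝ) : Prop :=
  IsDist π ∧ ∀ y, ∑ x, π x * P x y = π y

/-- Fixation axiom: some site `i` can propagate its lineage through the whole
population via finitely many replacement events of positive probability. -/
def FixationAxiom {N : ℕ} (p : Event N → ℝ) : Prop :=
  ∃ (i : Fin N) (m : ℕ) (E : Fin m → Event N), 1 ≤ m ∧
    (∀ k, 0 < p (E k)) ∧ (∃ k, i ∈ (E k).1) ∧
    ∀ j, ((List.ofFn (fun k => extMap (E k))).foldr (· ∘ ·) id) j = i

/-- Pairwise identity-by-state probability under the distribution `π`. -/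
noncomputable def phi2 {N n : ℕ} (π : (Fin N → Fin n) → ℝ) (i j : Fin N) : ℝ :=
  ∑ x, π x * (if x i = x j then (1:ℝ) else 0)

/-- Triple identity-by-state probability under the distribution `π`. -/
noncomputable def phi3 {N n : ℕ} (π : (Fin N → Fin n) → ℝ) (i j k : Fin N) : ℝ :=
  ∑ x, π x * (if x i = x j ∧ x j = x k then (1:ℝ) else 0)

/-- The probability that `i` replaces `j`, for fecundity vector `F`, under the
replacement-rule family `p`. -/
noncomputable def eRep {N : ℕ} (p : (Fin N → ℝ) → Event N → ℝ) (F : Fin N → ℝ)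
    (i j : Fin N) : ℝ :=
  ∑ E ∈ univ.filter (fun E : Event N => j ∈ E.1 ∧ E.2 j = i), p F E

/-- `mCoef p k i j` is the marginal effect `m_k^{ij}` of `k`'s fecundity on the
probability that `i` replaces `j`, evaluated at the all-ones fecundity vector. -/
noncomputable def mCoef {N : ℕ} (p : (Fin N → ℝ) → Event N → ℝ) (k i j : Fin N) : ℝ :=
  fderiv ℝ (fun F => eRep p F i j) (fun _ => (1:ℝ)) (Pi.single k 1)

/-- Neutral replacement probability `e°_{ij}`. -/
noncomputable def e0 {N : ℕ} (p : (Fin N → ℝ) → Event N → ℝ) (i j : Fin N) : ℝ :=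
  eRep p (fun _ => (1:ℝ)) i j

/-- Neutral death probability `d°_i`. -/
noncomputable def d0 {N : ℕ} (p : (Fin N → ℝ) → Event N → ℝ) (i : Fin N) : ℝ :=
  ∑ j, e0 p j i

/-- Ancestral random-walk matrix `A_{ij} := e°_{ji} / d°_i`. -/
noncomputable def Amat {N : ℕ} (p : (Fin N → ℝ) → Event N → ℝ) :
    Matrix (Fin N) (Fin N) ℝ :=
  Matrix.of fun i j => e0 p j i / d0 p i

/-- Mutation-weighted quantity `μ_i := (1/N)·Σ_j u·(Ã⁻¹)_{ji}` with
`Ã := I − (1−u)A`. -/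
noncomputable def muVec {N : ℕ} (p : (Fin N → ℝ) → Event N → ℝ) (u : ℝ) (i : Fin N) : ℝ :=
  (1/(N:ℝ)) * ∑ j, u * ((1 - (1-u) • Amat p)⁻¹ j i)

/-- Mutation-weighted reproductive value `v*_i := μ_i / (u·d°_i)`. -/
noncomputable def vstar {N : ℕ} (p : (Fin N → ℝ) → Event N → ℝ) (u : ℝ) (i : Fin N) : ℝ :=
  muVec p u i / (u * d0 p i)

/-- Fecundity vector `F_i(x) = exp(δ·u_i(x))` for payoff functions `pay`. -/
noncomputable def fec {N n : ℕ} (pay : Fin N → (Fin N → Fin n) → ℝ) (δ : ℝ)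
    (x : Fin N → Fin n) : Fin N → ℝ :=
  fun i => Real.exp (δ * pay i x)

/-- Transition probabilities of the mutation–selection chain at selection
intensity `δ` for payoff functions `pay`. -/
noncomputable def PdelGen (N n : ℕ) (p : (Fin N → ℝ) → Event N → ℝ) (u : ℝ)
    (pay : Fin N → (Fin N → Fin n) → ℝ) (δ : ℝ)
    (x y : Fin N → Fin n) : ℝ :=
  transMat N n (p (fec pay δ x)) u x y

/-- The expected change `Δ̂_{v,y}(x)` in the `v`-weighted abundance of strategy
`y` from state `x`, at selection intensity `δ`. -/
noncomputable def Dhat (N n : ℕ) (p : (Fin N → ℝ) → Event N → ℝ) (u : ℝ)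
    (pay : Fin N → (Fin N → Fin n) → ℝ) (v : Fin N → ℝ) (y : Fin n) (δ : ℝ)
    (x : Fin N → Fin n) : ℝ :=
  (∑ i, (if x i = y then (1:ℝ) else 0) *
      ((∑ j, eRep p (fec pay δ x) i j * v j) - (∑ j, eRep p (fec pay δ x) j i * v i)))
    + (u/(n:ℝ)) * ∑ i, (∑ j, eRep p (fec pay δ x) i j * v j) *
        (1 - (n:ℝ) * (if x i = y then (1:ℝ) else 0))

/-- The derivative `Δ̂'_{v,y}(x)` of `Δ̂` in `δ` at `δ = 0`, for fixed state `x`. -/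
noncomputable def Dhat' (N n : ℕ) (p : (Fin N → ℝ) → Event N → ℝ) (u : ℝ)
    (pay : Fin N → (Fin N → Fin n) → ℝ) (v : Fin N → ℝ) (y : Fin n)
    (x : Fin N → Fin n) : ℝ :=
  deriv (fun δ => Dhat N n p u pay v y δ x) 0


section Helpers

variable {N n : ℕ}

/-- sum over all states of a product of per-site factors, with one site marked. -/
lemma sum_pi_prod_mark (f : Fin N → Fin n → ℝ) (hf : ∀ i, ∑ a, f i a = 1)
    (k : Fin N) (y : Fin n) :
    ∑ g : Fin N → Fin n, (∏ i, f i (g i)) * (if g k = y then (1:ℝ) else 0)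
      = f k y := by
  have h1 : ∀ g : Fin N → Fin n,
      (∏ i, f i (g i)) * (if g k = y then (1:ℝ) else 0)
        = ∏ i, (f i (g i) * (if i = k then (if g i = y then (1:ℝ) else 0) else 1)) := by
    intro g
    rw [Finset.prod_mul_distrib]
    congr 1
    rw [Finset.prod_ite_eq' univ k (fun i => if g i = y then (1:ℝ) else 0)]
    simp
  simp only [h1]
  rw [← Fintype.prod_sum (fun i a => f i a * (if i = k then (if a = y then (1:ℝ) else 0) else 1))]
  have h2 : ∀ i, (∑ a, f i a * (if i = k then (if a = y then (1:ℝ) else 0) else 1))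
      = if i = k then f k y else 1 := by
    intro i
    by_cases hik : i = k
    · rw [hik]
      simp only [eq_self_iff_true, if_true, mul_ite, mul_one, mul_zero]
      rw [Finset.sum_ite_eq' univ y (f k)]
      simp
    · simp [hik, hf i]
  rw [Finset.prod_congr rfl (fun i _ => h2 i), Finset.prod_ite_eq' univ k (fun _ => f k y)]
  simp

lemma sum_pi_prod_w (v : Fin N → ℝ) (y : Fin n) (f : Fin N → Fin n → ℝ)
    (hf : ∀ i, ∑ a, f i a = 1) :
    ∑ g : Fin N → Fin n, (∏ i, f i (g i)) * (∑ k, v k * (if g k = y then (1:ℝ) else 0))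
      = ∑ k, v k * f k y := by
  have : ∀ g : Fin N → Fin n, (∏ i, f i (g i)) * (∑ k, v k * (if g k = y then (1:ℝ) else 0))
      = ∑ k, v k * ((∏ i, f i (g i)) * (if g k = y then (1:ℝ) else 0)) := by
    intro g; rw [Finset.mul_sum]; exact Finset.sum_congr rfl fun k _ => by ring
  simp only [this]
  rw [Finset.sum_comm]
  exact Finset.sum_congr rfl fun k _ => by rw [← Finset.mul_sum, sum_pi_prod_mark f hf k y]

/-- Per-state expected value of the weighted indicator under one transition. -/
lemma sum_transMat_w (hn : 1 ≤ n) (q : Event N → ℝ) (u : ℝ) (x : Fin N → Fin n)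
    (v : Fin N → ℝ) (y : Fin n) :
    ∑ x' : Fin N → Fin n, transMat N n q u x x' * (∑ k, v k * (if x' k = y then (1:ℝ) else 0))
      = ∑ E : Event N, q E *
          ((∑ k ∈ E.1, v k * ((1-u) * (if x (E.2 k) = y then (1:ℝ) else 0) + u/(n:ℝ)))
            + ∑ k ∈ E.1ᶜ, v k * (if x k = y then (1:ℝ) else 0)) := by
  have hn0 : (n:ℝ) ≠ 0 := Nat.cast_ne_zero.mpr (by omega)
  simp only [transMat, Finset.sum_mul]
  rw [Finset.sum_comm]
  refine Finset.sum_congr rfl fun E _ => ?_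
  set f : Fin N → Fin n → ℝ := fun i a =>
    if i ∈ E.1 then (1-u) * (if a = x (E.2 i) then (1:ℝ) else 0) + u/(n:ℝ)
    else (if a = x i then (1:ℝ) else 0) with hfdef
  have hf : ∀ i, ∑ a, f i a = 1 := by
    intro i
    by_cases hi : i ∈ E.1
    · simp only [hfdef, if_pos hi]
      rw [Finset.sum_add_distrib, ← Finset.mul_sum, Finset.sum_ite_eq' univ (x (E.2 i))]
      simp only [Finset.sum_const, card_univ, Fintype.card_fin, nsmul_eq_mul, mem_univ, if_pos]
      field_simp
      ring
    · simp only [hfdef, if_neg hi]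
      rw [Finset.sum_ite_eq' univ (x i)]
      simp
  have hprod : ∀ x' : Fin N → Fin n,
      q E * (∏ i ∈ E.1, ((1 - u) * (if x' i = x (E.2 i) then (1:ℝ) else 0) + u / (n:ℝ))) *
        (∏ i ∈ E.1ᶜ, (if x' i = x i then (1:ℝ) else 0)) *
        (∑ k, v k * (if x' k = y then (1:ℝ) else 0))
      = q E * ((∏ i, f i (x' i)) * (∑ k, v k * (if x' k = y then (1:ℝ) else 0))) := by
    intro x'
    have e1 : (∏ i ∈ E.1, ((1 - u) * (if x' i = x (E.2 i) then (1:ℝ) else 0) + u / (n:ℝ)))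
        = ∏ i ∈ E.1, f i (x' i) :=
      Finset.prod_congr rfl fun i hi => by simp [hfdef, hi]
    have e2 : (∏ i ∈ E.1ᶜ, (if x' i = x i then (1:ℝ) else 0)) = ∏ i ∈ E.1ᶜ, f i (x' i) :=
      Finset.prod_congr rfl fun i hi => by
        simp only [Finset.mem_compl] at hi; simp [hfdef, hi]
    rw [e1, e2, mul_assoc (q E), Finset.prod_mul_prod_compl E.1 (fun i => f i (x' i))]
    ring
  simp only [hprod]
  rw [← Finset.mul_sum, sum_pi_prod_w v y f hf]
  congr 1
  rw [← Finset.sum_add_sum_compl E.1 (fun k => v k * f k y)]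
  congr 1
  · refine Finset.sum_congr rfl fun k hk => ?_
    simp only [hfdef, if_pos hk]
    rw [if_congr (eq_comm (a := y) (b := x (E.2 k))) rfl rfl]
  · refine Finset.sum_congr rfl fun k hk => ?_
    simp only [Finset.mem_compl] at hk
    simp only [hfdef, if_neg hk]
    rw [if_congr (eq_comm (a := y) (b := x k)) rfl rfl]

lemma sum_mul_eRep (p : (Fin N → ℝ) → Event N → ℝ) (F : Fin N → ℝ)
    (f : Fin N → Fin N → ℝ) :
    ∑ i, ∑ j, f i j * eRep p F i j
      = ∑ E : Event N, p F E * ∑ j ∈ E.1, f (E.2 j) j := by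
  simp only [eRep, Finset.sum_filter, Finset.mul_sum]
  rw [Finset.sum_comm]
  refine Eq.trans (Finset.sum_congr rfl fun j _ => Finset.sum_comm) ?_
  rw [Finset.sum_comm]
  refine Finset.sum_congr rfl fun E _ => ?_
  have hinner : ∀ j : Fin N,
      (∑ i, f i j * if j ∈ E.1 ∧ E.2 j = i then p F E else 0)
        = if j ∈ E.1 then p F E * f (E.2 j) j else 0 := by
    intro j
    by_cases hj : j ∈ E.1
    · simp only [hj, true_and, mul_ite, mul_zero]
      rw [Finset.sum_ite_eq univ (E.2 j) (fun i => f i j * p F E)]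
      simp [mul_comm]
    · simp [hj]
  rw [Finset.sum_congr rfl fun j _ => hinner j, Finset.sum_ite_mem, Finset.univ_inter,
    ← Finset.mul_sum]

lemma fec_pos {pay : Fin N → (Fin N → Fin n) → ℝ} {δ : ℝ} {x : Fin N → Fin n} (i : Fin N) :
    0 < fec pay δ x i := Real.exp_pos _

lemma fec_zero (pay : Fin N → (Fin N → Fin n) → ℝ) (x : Fin N → Fin n) :
    fec pay 0 x = fun _ => (1:ℝ) := funext fun i => by simp [fec]

lemma sum_comb {α : Type*} (s : Finset α) (a b c d e : α → ℝ) (r : ℝ)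
    (h : ∀ i ∈ s, a i - b i + r * (c i - d i) = e i) :
    (∑ i ∈ s, a i) - (∑ i ∈ s, b i) + r * ((∑ i ∈ s, c i) - (∑ i ∈ s, d i))
      = ∑ i ∈ s, e i := by
  rw [← Finset.sum_congr rfl h]
  simp only [Finset.sum_add_distrib, Finset.sum_sub_distrib, ← Finset.mul_sum]

/-- `Dhat` in per-event (drift) form. -/
lemma dhat_eq_drift (hn : 1 ≤ n) (p : (Fin N → ℝ) → Event N → ℝ) (u : ℝ)
    (pay : Fin N → (Fin N → Fin n) → ℝ) (v : Fin N → ℝ) (y : Fin n) (δ : ℝ)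
    (x : Fin N → Fin n) :
    Dhat N n p u pay v y δ x
      = ∑ E : Event N, p (fec pay δ x) E *
          ∑ k ∈ E.1, v k * ((1-u) * (if x (E.2 k) = y then (1:ℝ) else 0) + u/(n:ℝ)
            - (if x k = y then (1:ℝ) else 0)) := by
  have hn0 : (n:ℝ) ≠ 0 := Nat.cast_ne_zero.mpr (by omega)
  set F := fec pay δ x with hF
  have hA := sum_mul_eRep p F (fun i j => (if x i = y then (1:ℝ) else 0) * v j)
  have hB := sum_mul_eRep p F (fun i j => (if x j = y then (1:ℝ) else 0) * v j)
  have hC := sum_mul_eRep p F (fun i j => v j)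
  have hD := sum_mul_eRep p F (fun i j => ((n:ℝ) * (if x i = y then (1:ℝ) else 0)) * v j)
  have t1 : (∑ i, (if x i = y then (1:ℝ) else 0) * (∑ j, eRep p F i j * v j))
      = ∑ i, ∑ j, ((if x i = y then (1:ℝ) else 0) * v j) * eRep p F i j := by
    refine Finset.sum_congr rfl fun i _ => ?_
    rw [Finset.mul_sum]
    exact Finset.sum_congr rfl fun j _ => by ring
  have t2 : (∑ i, (if x i = y then (1:ℝ) else 0) * (∑ j, eRep p F j i * v i))
      = ∑ i, ∑ j, ((if x j = y then (1:ℝ) else 0) * v j) * eRep p F i j := by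
    have e1 : (∑ i, (if x i = y then (1:ℝ) else 0) * (∑ j, eRep p F j i * v i))
        = ∑ i, ∑ j, ((if x i = y then (1:ℝ) else 0) * v i) * eRep p F j i := by
      refine Finset.sum_congr rfl fun i _ => ?_
      rw [Finset.mul_sum]
      exact Finset.sum_congr rfl fun j _ => by ring
    rw [e1]
    exact Finset.sum_comm
  have t3 : (∑ i, (∑ j, eRep p F i j * v j)) = ∑ i, ∑ j, v j * eRep p F i j :=
    Finset.sum_congr rfl fun i _ => Finset.sum_congr rfl fun j _ => by ring
  have t5 : (∑ i, (∑ j, eRep p F i j * v j) * ((n:ℝ) * (if x i = y then (1:ℝ) else 0)))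
      = ∑ i, ∑ j, (((n:ℝ) * (if x i = y then (1:ℝ) else 0)) * v j) * eRep p F i j := by
    refine Finset.sum_congr rfl fun i _ => ?_
    rw [Finset.sum_mul]
    exact Finset.sum_congr rfl fun j _ => by ring
  have hsplit1 : (∑ i, (if x i = y then (1:ℝ) else 0) *
        ((∑ j, eRep p F i j * v j) - (∑ j, eRep p F j i * v i)))
      = (∑ i, (if x i = y then (1:ℝ) else 0) * (∑ j, eRep p F i j * v j))
        - ∑ i, (if x i = y then (1:ℝ) else 0) * (∑ j, eRep p F j i * v i) := by
    simp only [mul_sub]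
    exact Finset.sum_sub_distrib _ _
  have hsplit2 : (∑ i, (∑ j, eRep p F i j * v j) * (1 - (n:ℝ) * (if x i = y then (1:ℝ) else 0)))
      = (∑ i, (∑ j, eRep p F i j * v j))
        - ∑ i, (∑ j, eRep p F i j * v j) * ((n:ℝ) * (if x i = y then (1:ℝ) else 0)) := by
    simp only [mul_sub, mul_one]
    exact Finset.sum_sub_distrib _ _
  have hDhat : Dhat N n p u pay v y δ x
      = (∑ i, ∑ j, ((if x i = y then (1:ℝ) else 0) * v j) * eRep p F i j)
        - (∑ i, ∑ j, ((if x j = y then (1:ℝ) else 0) * v j) * eRep p F i j)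
        + (u/(n:ℝ)) * ((∑ i, ∑ j, v j * eRep p F i j)
          - ∑ i, ∑ j, (((n:ℝ) * (if x i = y then (1:ℝ) else 0)) * v j) * eRep p F i j) := by
    simp only [Dhat, ← hF]
    rw [hsplit1, hsplit2, t1, t2, t3, t5]
  rw [hDhat, hA, hB, hC, hD]
  refine sum_comb univ _ _ _ _ _ _ fun E _ => ?_
  have hk : ∀ k ∈ E.1,
      (if x (E.2 k) = y then (1:ℝ) else 0) * v k - (if x k = y then (1:ℝ) else 0) * v k
        + (u/(n:ℝ)) * (v k - ((n:ℝ) * (if x (E.2 k) = y then (1:ℝ) else 0)) * v k)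
      = v k * ((1-u) * (if x (E.2 k) = y then (1:ℝ) else 0) + u/(n:ℝ)
          - (if x k = y then (1:ℝ) else 0)) := by
    intro k _
    by_cases h1 : x (E.2 k) = y <;> by_cases h2 : x k = y <;>
      simp only [h1, h2, if_true, if_false, eq_self_iff_true] <;> field_simp <;> ring
  calc p F E * (∑ j ∈ E.1, (if x (E.2 j) = y then (1:ℝ) else 0) * v j)
        - p F E * (∑ j ∈ E.1, (if x j = y then (1:ℝ) else 0) * v j)
        + (u/(n:ℝ)) * (p F E * (∑ j ∈ E.1, v j)
          - p F E * (∑ j ∈ E.1, ((n:ℝ) * (if x (E.2 j) = y then (1:ℝ) else 0)) * v j))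
      = p F E * ((∑ j ∈ E.1, (if x (E.2 j) = y then (1:ℝ) else 0) * v j)
          - (∑ j ∈ E.1, (if x j = y then (1:ℝ) else 0) * v j)
          + (u/(n:ℝ)) * ((∑ j ∈ E.1, v j)
            - ∑ j ∈ E.1, ((n:ℝ) * (if x (E.2 j) = y then (1:ℝ) else 0)) * v j)) := by ring
    _ = _ := by rw [sum_comb E.1 _ _ _ _ _ _ hk]

/-- `Dhat` is the expected change of the `v`-weighted `y`-abundance. -/
lemma dhat_eq_trans (hn : 1 ≤ n) (p : (Fin N → ℝ) → Event N → ℝ) (u : ℝ)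
    (pay : Fin N → (Fin N → Fin n) → ℝ) (v : Fin N → ℝ) (y : Fin n) (δ : ℝ)
    (x : Fin N → Fin n) (hq1 : ∑ E : Event N, p (fec pay δ x) E = 1) :
    Dhat N n p u pay v y δ x
      = (∑ x' : Fin N → Fin n, PdelGen N n p u pay δ x x' *
          (∑ k, v k * (if x' k = y then (1:ℝ) else 0)))
        - (∑ k, v k * (if x k = y then (1:ℝ) else 0)) := by
  rw [dhat_eq_drift hn p u pay v y δ x]
  simp only [PdelGen]
  rw [sum_transMat_w hn (p (fec pay δ x)) u x v y]
  have hw : (∑ E : Event N, p (fec pay δ x) E *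
        ((∑ k ∈ E.1, v k * (if x k = y then (1:ℝ) else 0))
          + ∑ k ∈ E.1ᶜ, v k * (if x k = y then (1:ℝ) else 0)))
      = ∑ k, v k * (if x k = y then (1:ℝ) else 0) := by
    have hsplit : ∀ E : Event N,
        ((∑ k ∈ E.1, v k * (if x k = y then (1:ℝ) else 0))
          + ∑ k ∈ E.1ᶜ, v k * (if x k = y then (1:ℝ) else 0))
        = ∑ k, v k * (if x k = y then (1:ℝ) else 0) :=
      fun E => Finset.sum_add_sum_compl E.1 _
    simp only [hsplit]
    rw [← Finset.sum_mul, hq1, one_mul]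
  rw [← hw, ← Finset.sum_sub_distrib]
  refine Finset.sum_congr rfl fun E _ => ?_
  rw [← mul_sub]
  congr 1
  rw [add_sub_add_right_eq_sub, ← Finset.sum_sub_distrib]
  exact Finset.sum_congr rfl fun k _ => by ring

lemma sum_comb2 {α : Type*} (s : Finset α) (a b c d e : α → ℝ) (r : ℝ)
    (h : ∀ i ∈ s, a i - b i - r * d i = e i) :
    (∑ i ∈ s, a i) - (∑ i ∈ s, b i) + r * ((∑ i ∈ s, c i) - (∑ i ∈ s, d i))
      = (∑ i ∈ s, e i) + r * ∑ i ∈ s, c i := by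
  rw [← Finset.sum_congr rfl h]
  simp only [Finset.sum_sub_distrib, ← Finset.mul_sum]
  ring

/-- expectation of `Dhat` under a stationary distribution vanishes. -/
lemma sum_stationary_dhat (hn : 1 ≤ n) (p : (Fin N → ℝ) → Event N → ℝ) (u : ℝ)
    (pay : Fin N → (Fin N → Fin n) → ℝ) (v : Fin N → ℝ) (y : Fin n) (δ : ℝ)
    (π : (Fin N → Fin n) → ℝ)
    (hq1 : ∀ x : Fin N → Fin n, ∑ E : Event N, p (fec pay δ x) E = 1)
    (hπ : IsStationary (PdelGen N n p u pay δ) π) :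
    ∑ x, π x * Dhat N n p u pay v y δ x = 0 := by
  have hd : ∀ x : Fin N → Fin n, Dhat N n p u pay v y δ x
      = (∑ x' : Fin N → Fin n, PdelGen N n p u pay δ x x' *
          (∑ k, v k * (if x' k = y then (1:ℝ) else 0)))
        - (∑ k, v k * (if x k = y then (1:ℝ) else 0)) :=
    fun x => dhat_eq_trans hn p u pay v y δ x (hq1 x)
  simp only [hd, mul_sub]
  rw [Finset.sum_sub_distrib]
  have h1 : (∑ x, π x * ∑ x' : Fin N → Fin n, PdelGen N n p u pay δ x x' *
        (∑ k, v k * (if x' k = y then (1:ℝ) else 0)))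
      = ∑ x' : Fin N → Fin n, π x' * (∑ k, v k * (if x' k = y then (1:ℝ) else 0)) := by
    simp only [Finset.mul_sum]
    rw [Finset.sum_comm]
    refine Finset.sum_congr rfl fun x' _ => ?_
    rw [Finset.sum_comm]
    refine Finset.sum_congr rfl fun i _ => ?_
    have : ∀ x : Fin N → Fin n, π x * (PdelGen N n p u pay δ x x' *
          (v i * (if x' i = y then (1:ℝ) else 0)))
        = (π x * PdelGen N n p u pay δ x x') * (v i * (if x' i = y then (1:ℝ) else 0)) :=
      fun x => by ring
    rw [Finset.sum_congr rfl fun x _ => this x, ← Finset.sum_mul, hπ.2 x']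
  rw [h1, sub_self]

/-- the neutral `Dhat` is affine in the strategy indicators. -/
lemma dhat_zero (hn : 1 ≤ n) (p : (Fin N → ℝ) → Event N → ℝ) (u : ℝ)
    (pay : Fin N → (Fin N → Fin n) → ℝ) (v : Fin N → ℝ) (y : Fin n)
    (x : Fin N → Fin n) :
    Dhat N n p u pay v y 0 x
      = (∑ i, ((1-u) * (∑ j, e0 p i j * v j) - (∑ j, e0 p j i * v i)) *
          (if x i = y then (1:ℝ) else 0))
        + (u/(n:ℝ)) * ∑ i, ∑ j, e0 p i j * v j := by
  have hn0 : (n:ℝ) ≠ 0 := Nat.cast_ne_zero.mpr (by omega)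
  have hfec : fec pay 0 x = fun _ => (1:ℝ) := fec_zero pay x
  simp only [Dhat, hfec, e0]
  set F : Fin N → ℝ := fun _ => (1:ℝ) with hF
  have hsplit1 : (∑ i, (if x i = y then (1:ℝ) else 0) *
        ((∑ j, eRep p F i j * v j) - (∑ j, eRep p F j i * v i)))
      = (∑ i, (if x i = y then (1:ℝ) else 0) * (∑ j, eRep p F i j * v j))
        - ∑ i, (if x i = y then (1:ℝ) else 0) * (∑ j, eRep p F j i * v i) := by
    simp only [mul_sub]
    exact Finset.sum_sub_distrib _ _
  have hsplit2 : (∑ i, (∑ j, eRep p F i j * v j) * (1 - (n:ℝ) * (if x i = y then (1:ℝ) else 0)))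
      = (∑ i, (∑ j, eRep p F i j * v j))
        - ∑ i, (∑ j, eRep p F i j * v j) * ((n:ℝ) * (if x i = y then (1:ℝ) else 0)) := by
    simp only [mul_sub, mul_one]
    exact Finset.sum_sub_distrib _ _
  rw [hsplit1, hsplit2]
  exact sum_comb2 univ _ _ _ _ _ _ fun i _ => by
    by_cases h : x i = y <;> simp only [h, if_true, if_false] <;> field_simp <;>
      simp only [mul_comm (v i) (eRep p F _ i)] <;> ring

lemma fec_diff (pay : Fin N → (Fin N → Fin n) → ℝ) (x : Fin N → Fin n) :
    DifferentiableAt ℝ (fun δ : ℝ => fec pay δ x) 0 := by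
  apply differentiableAt_pi.mpr
  intro i
  exact (differentiableAt_id.mul_const _).exp

lemma p_diff_at (p : (Fin N → ℝ) → Event N → ℝ)
    (hpdiff : ∀ (E : Event N) (F : Fin N → ℝ), (∀ i, 0 < F i) →
      DifferentiableAt ℝ (fun G => p G E) F)
    (pay : Fin N → (Fin N → Fin n) → ℝ) (x : Fin N → Fin n) (E : Event N) :
    DifferentiableAt ℝ (fun δ : ℝ => p (fec pay δ x) E) 0 :=
  (hpdiff E (fec pay 0 x) (fun _ => fec_pos _)).comp (g := fun G => p G E) 0 (fec_diff pay x)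

lemma eRep_diff (p : (Fin N → ℝ) → Event N → ℝ)
    (hpdiff : ∀ (E : Event N) (F : Fin N → ℝ), (∀ i, 0 < F i) →
      DifferentiableAt ℝ (fun G => p G E) F)
    (pay : Fin N → (Fin N → Fin n) → ℝ) (x : Fin N → Fin n) (i j : Fin N) :
    DifferentiableAt ℝ (fun δ : ℝ => eRep p (fec pay δ x) i j) 0 := by
  simp only [eRep]
  exact DifferentiableAt.fun_sum fun E _ => p_diff_at p hpdiff pay x E

lemma dhat_diff (p : (Fin N → ℝ) → Event N → ℝ)
    (hpdiff : ∀ (E : Event N) (F : Fin N → ℝ), (∀ i, 0 < F i) →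
      DifferentiableAt ℝ (fun G => p G E) F)
    (u : ℝ) (pay : Fin N → (Fin N → Fin n) → ℝ) (v : Fin N → ℝ) (y : Fin n)
    (x : Fin N → Fin n) :
    DifferentiableAt ℝ (fun δ : ℝ => Dhat N n p u pay v y δ x) 0 := by
  simp only [Dhat]
  apply DifferentiableAt.add
  · refine DifferentiableAt.fun_sum fun i _ => DifferentiableAt.const_mul ?_ _
    exact DifferentiableAt.sub
      (DifferentiableAt.fun_sum fun j _ => (eRep_diff p hpdiff pay x i j).mul_const _)
      (DifferentiableAt.fun_sum fun j _ => (eRep_diff p hpdiff pay x j i).mul_const _)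
  · refine DifferentiableAt.const_mul ?_ _
    refine DifferentiableAt.fun_sum fun i _ => ?_
    exact (DifferentiableAt.fun_sum fun j _ => (eRep_diff p hpdiff pay x i j).mul_const _).mul_const _

lemma pdel_tendsto (p : (Fin N → ℝ) → Event N → ℝ)
    (hpdiff : ∀ (E : Event N) (F : Fin N → ℝ), (∀ i, 0 < F i) →
      DifferentiableAt ℝ (fun G => p G E) F)
    (u : ℝ) (pay : Fin N → (Fin N → Fin n) → ℝ) (x x' : Fin N → Fin n) :
    Filter.Tendsto (fun δ : ℝ => PdelGen N n p u pay δ x x') (nhds 0)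
      (nhds (PdelGen N n p u pay 0 x x')) := by
  simp only [PdelGen, transMat]
  refine tendsto_finset_sum _ fun E _ => ?_
  exact (Filter.Tendsto.mul_const _
    ((p_diff_at p hpdiff pay x E).continuousAt.tendsto)).mul_const _


open Filter in
/-- right-continuity at `0` of the stationary distribution family, via
compactness and uniqueness of the neutral stationary distribution. -/
lemma pi_cont (p : (Fin N → ℝ) → Event N → ℝ)
    (hpdiff : ∀ (E : Event N) (F : Fin N → ℝ), (∀ i, 0 < F i) →
      DifferentiableAt ℝ (fun G => p G E) F)
    (u : ℝ) (pay : Fin N → (Fin N → Fin n) → ℝ)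
    (π : ℝ → (Fin N → Fin n) → ℝ) (ε : ℝ) (hε : 0 < ε)
    (hst : ∀ δ : ℝ, 0 ≤ δ → δ < ε →
      IsStationary (PdelGen N n p u pay δ) (π δ) ∧
      ∀ π', IsStationary (PdelGen N n p u pay δ) π' → π' = π δ) :
    Tendsto (fun δ => π δ) (nhdsWithin (0:ℝ) (Set.Ioi 0)) (nhds (π 0)) := by
  set l := nhdsWithin (0:ℝ) (Set.Ioi 0) with hl
  by_contra hnot
  obtain ⟨W, hW, hfreq⟩ := Filter.not_tendsto_iff_exists_frequently_notMem.mp hnot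
  have hne : Filter.NeBot (l ⊓ Filter.principal {δ | π δ ∉ W}) :=
    Filter.frequently_iff_neBot.mp hfreq
  set U := Ultrafilter.of (l ⊓ Filter.principal {δ | π δ ∉ W}) with hU
  have hUle : ↑U ≤ l ⊓ Filter.principal {δ | π δ ∉ W} := Ultrafilter.of_le _
  have hUl : ↑U ≤ l := hUle.trans inf_le_left
  have hIoo : Set.Ioo (0:ℝ) ε ∈ U := hUl (Ioo_mem_nhdsGT_of_mem ⟨le_refl 0, hε⟩)
  have hEv : ∀ᶠ δ in ↑U, δ ∈ Set.Ioo (0:ℝ) ε := hIoo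
  have hmemK : ∀ δ ∈ Set.Ioo (0:ℝ) ε,
      π δ ∈ Set.Icc (0 : (Fin N → Fin n) → ℝ) 1 := by
    intro δ hδ
    obtain ⟨hs, _⟩ := hst δ hδ.1.le hδ.2
    constructor
    · intro x; exact hs.1.1 x
    · intro x
      calc π δ x ≤ ∑ z, π δ z :=
            Finset.single_le_sum (fun z _ => hs.1.1 z) (Finset.mem_univ x)
        _ = 1 := hs.1.2
  have hKU : Set.Icc (0 : (Fin N → Fin n) → ℝ) 1 ∈ Ultrafilter.map (fun δ => π δ) U :=
    Filter.mem_map.mpr (Filter.mem_of_superset hIoo fun δ hδ => hmemK δ hδ)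
  obtain ⟨q, hqK, hq⟩ := (isCompact_Icc (a := (0 : (Fin N → Fin n) → ℝ)) (b := 1)).ultrafilter_le_nhds
    (Ultrafilter.map (fun δ => π δ) U) (Filter.le_principal_iff.mpr hKU)
  have htend : Tendsto (fun δ => π δ) ↑U (nhds q) := hq
  have hcomp : ∀ x, Tendsto (fun δ => π δ x) ↑U (nhds (q x)) :=
    fun x => tendsto_pi_nhds.mp htend x
  have hq0 : ∀ x, 0 ≤ q x := fun x =>
    ge_of_tendsto (hcomp x) (hEv.mono fun δ hδ => (hst δ hδ.1.le hδ.2).1.1.1 x)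
  have hq1 : ∑ x, q x = 1 := by
    have h1 : Tendsto (fun δ => ∑ x, π δ x) ↑U (nhds (∑ x, q x)) :=
      tendsto_finset_sum _ fun x _ => hcomp x
    have h2 : (fun δ => ∑ x, π δ x) =ᶠ[↑U] fun _ => (1:ℝ) :=
      hEv.mono fun δ hδ => (hst δ hδ.1.le hδ.2).1.1.2
    exact (tendsto_nhds_unique (h1.congr' h2) tendsto_const_nhds)
  have hqstat : ∀ y', ∑ x, q x * PdelGen N n p u pay 0 x y' = q y' := by
    intro y'
    have h1 : Tendsto (fun δ => ∑ x, π δ x * PdelGen N n p u pay δ x y') ↑U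
        (nhds (∑ x, q x * PdelGen N n p u pay 0 x y')) :=
      tendsto_finset_sum _ fun x _ => (hcomp x).mul
        ((pdel_tendsto p hpdiff u pay x y').mono_left (hUl.trans nhdsWithin_le_nhds))
    have h2 : (fun δ => ∑ x, π δ x * PdelGen N n p u pay δ x y') =ᶠ[↑U]
        fun δ => π δ y' := hEv.mono fun δ hδ => (hst δ hδ.1.le hδ.2).1.2 y'
    exact tendsto_nhds_unique (h1.congr' h2) (hcomp y')
  have hqeq : q = π 0 := (hst 0 le_rfl hε).2 q ⟨⟨hq0, hq1⟩, hqstat⟩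
  have hWq : {δ | π δ ∈ W} ∈ U := Filter.mem_map.mp (hq (by rw [hqeq]; exact hW))
  have hWc : {δ | π δ ∉ W} ∈ U := (hUle.trans inf_le_right) (Filter.mem_principal_self _)
  obtain ⟨δ, hδ1, hδ2⟩ := Filter.nonempty_of_mem (Filter.inter_mem hWq hWc)
  exact hδ2 hδ1

end Helpers

/-- for every weight vector `v` and strategy `y`,
`E_{π°}[Δ̂'_{v,y}] = Σ_i (d̂°_{v,i} − (1−u)·b̂°_{v,i}) · d/dδ|₀ P_{π_δ}[X_i = y]`. -/
theorem stmt11 (N n : ℕ) (hN : 1 ≤ N) (hn : 1 ≤ n)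
    (p : (Fin N → ℝ) → Event N → ℝ)
    (hpdist : ∀ F : Fin N → ℝ, (∀ i, 0 < F i) → IsDist (p F))
    (hpdiff : ∀ (E : Event N) (F : Fin N → ℝ), (∀ i, 0 < F i) →
      DifferentiableAt ℝ (fun G => p G E) F)
    (hfix : FixationAxiom (p (fun _ => (1:ℝ))))
    (u : ℝ) (hu0 : 0 < u) (hu1 : u ≤ 1)
    (pay : Fin N → (Fin N → Fin n) → ℝ)
    (π : ℝ → (Fin N → Fin n) → ℝ)
    (hstat : ∃ ε > (0:ℝ), ∀ δ : ℝ, 0 ≤ δ → δ < ε →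
      IsStationary (PdelGen N n p u pay δ) (π δ) ∧
      ∀ π', IsStationary (PdelGen N n p u pay δ) π' → π' = π δ)
    (hdiff : ∀ (i : Fin N) (y : Fin n),
      DifferentiableAt ℝ (fun δ => ∑ x, π δ x * (if x i = y then (1:ℝ) else 0)) 0)
    (v : Fin N → ℝ) (y : Fin n) :
    ∑ x, π 0 x * Dhat' N n p u pay v y x =
      ∑ i, ((∑ j, e0 p j i * v i) - (1-u) * ∑ j, e0 p i j * v j) *
        deriv (fun δ => ∑ x, π δ x * (if x i = y then (1:ℝ) else 0)) 0 := by
  classical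
  obtain ⟨ε, hε, hst⟩ := hstat
  have hq1 : ∀ (δ : ℝ) (x : Fin N → Fin n), ∑ E : Event N, p (fec pay δ x) E = 1 :=
    fun δ x => (hpdist _ (fun i => fec_pos i)).2
  set l := nhdsWithin (0:ℝ) (Set.Ioi 0) with hl
  set c : Fin N → ℝ :=
    fun i => (1-u) * (∑ j, e0 p i j * v j) - (∑ j, e0 p j i * v i) with hc
  set C : ℝ := (u/(n:ℝ)) * ∑ i, ∑ j, e0 p i j * v j with hCdef
  have hdz : ∀ x : Fin N → Fin n, Dhat N n p u pay v y 0 x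
      = (∑ i, c i * (if x i = y then (1:ℝ) else 0)) + C := fun x => by
    rw [hc, hCdef]; exact dhat_zero hn p u pay v y x
  have hfδ : ∀ δ : ℝ, 0 ≤ δ → δ < ε →
      ∑ x, π δ x * Dhat N n p u pay v y 0 x
        = (∑ i, c i * (∑ x, π δ x * (if x i = y then (1:ℝ) else 0))) + C := by
    intro δ h0 hδ
    have hsum1 : ∑ x, π δ x = 1 := (hst δ h0 hδ).1.1.2
    simp only [hdz, mul_add]
    rw [Finset.sum_add_distrib, ← Finset.sum_mul, hsum1, one_mul]
    congr 1
    simp only [Finset.mul_sum]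
    rw [Finset.sum_comm]
    exact Finset.sum_congr rfl fun i _ => Finset.sum_congr rfl fun x _ => by ring
  have hzero : ∀ δ : ℝ, 0 ≤ δ → δ < ε →
      ∑ x, π δ x * Dhat N n p u pay v y δ x = 0 := fun δ h0 hδ =>
    sum_stationary_dhat hn p u pay v y δ (π δ) (hq1 δ) (hst δ h0 hδ).1
  have hf0 : (∑ i, c i * (∑ x, π 0 x * (if x i = y then (1:ℝ) else 0))) + C = 0 := by
    rw [← hfδ 0 le_rfl hε]
    exact hzero 0 le_rfl hε
  have hDD : ∀ x : Fin N → Fin n, HasDerivAt (fun δ => Dhat N n p u pay v y δ x)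
      (Dhat' N n p u pay v y x) 0 := fun x => by
    simp only [Dhat']
    exact (dhat_diff p hpdiff u pay v y x).hasDerivAt
  have hfder : HasDerivAt
      (fun δ => ∑ i, c i * (∑ x, π δ x * (if x i = y then (1:ℝ) else 0)))
      (∑ i, c i * deriv (fun δ => ∑ x, π δ x * (if x i = y then (1:ℝ) else 0)) 0) 0 :=
    HasDerivAt.fun_sum fun i _ => ((hdiff i y).hasDerivAt.const_mul (c i))
  have hlne : l ≤ nhdsWithin (0:ℝ) {(0:ℝ)}ᶜ :=
    nhdsWithin_mono 0 (fun δ hδ => (ne_of_gt hδ : δ ≠ 0))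
  have hslope : ∀ (f : ℝ → ℝ) (d : ℝ), HasDerivAt f d 0 →
      Filter.Tendsto (fun δ => (f δ - f 0)/δ) l (nhds d) := by
    intro f d hf
    have h1 := (hasDerivAt_iff_tendsto_slope.mp hf).mono_left hlne
    refine h1.congr fun δ => ?_
    rw [slope_def_field, sub_zero]
  have h3 : ∀ x : Fin N → Fin n, Filter.Tendsto (fun δ => π δ x) l (nhds (π 0 x)) :=
    fun x => (tendsto_pi_nhds.mp (pi_cont p hpdiff u pay π ε hε hst)) x
  have hGlim : Filter.Tendsto (fun δ =>
        (∑ x, π δ x * ((Dhat N n p u pay v y δ x - Dhat N n p u pay v y 0 x)/δ))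
        + ((∑ i, c i * (∑ x, π δ x * (if x i = y then (1:ℝ) else 0)))
            - (∑ i, c i * (∑ x, π 0 x * (if x i = y then (1:ℝ) else 0))))/δ) l
      (nhds ((∑ x, π 0 x * Dhat' N n p u pay v y x)
        + ∑ i, c i * deriv (fun δ => ∑ x, π δ x * (if x i = y then (1:ℝ) else 0)) 0)) :=
    Filter.Tendsto.add
      (tendsto_finset_sum _ fun x _ => (h3 x).mul (hslope _ _ (hDD x)))
      (hslope _ _ hfder)
  have hGzero : ∀ᶠ δ in l,
      ((∑ x, π δ x * ((Dhat N n p u pay v y δ x - Dhat N n p u pay v y 0 x)/δ))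
        + ((∑ i, c i * (∑ x, π δ x * (if x i = y then (1:ℝ) else 0)))
            - (∑ i, c i * (∑ x, π 0 x * (if x i = y then (1:ℝ) else 0))))/δ) = 0 := by
    filter_upwards [Ioo_mem_nhdsGT_of_mem ⟨le_rfl, hε⟩] with δ hδ
    have hδ0 : δ ≠ 0 := ne_of_gt hδ.1
    have e1 : ∑ x, π δ x * ((Dhat N n p u pay v y δ x - Dhat N n p u pay v y 0 x)/δ)
        = ((∑ x, π δ x * Dhat N n p u pay v y δ x)
            - (∑ x, π δ x * Dhat N n p u pay v y 0 x))/δ := by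
      have e2 : ∀ x : Fin N → Fin n,
          π δ x * ((Dhat N n p u pay v y δ x - Dhat N n p u pay v y 0 x)/δ)
            = (π δ x * Dhat N n p u pay v y δ x - π δ x * Dhat N n p u pay v y 0 x)/δ :=
        fun x => by ring
      rw [Finset.sum_congr rfl fun x _ => e2 x, ← Finset.sum_div, Finset.sum_sub_distrib]
    rw [e1, hzero δ hδ.1.le hδ.2, hfδ δ hδ.1.le hδ.2]
    have hCeq : C = -(∑ i, c i * (∑ x, π 0 x * (if x i = y then (1:ℝ) else 0))) := by
      linarith [hf0]
    rw [hCeq]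
    ring
  have key : (∑ x, π 0 x * Dhat' N n p u pay v y x)
      + (∑ i, c i * deriv (fun δ => ∑ x, π δ x * (if x i = y then (1:ℝ) else 0)) 0) = 0 := by
    have hG0 : Filter.Tendsto (fun δ =>
          (∑ x, π δ x * ((Dhat N n p u pay v y δ x - Dhat N n p u pay v y 0 x)/δ))
          + ((∑ i, c i * (∑ x, π δ x * (if x i = y then (1:ℝ) else 0)))
              - (∑ i, c i * (∑ x, π 0 x * (if x i = y then (1:ℝ) else 0))))/δ) l
        (nhds 0) :=
      Filter.Tendsto.congr' (hGzero.mono fun δ h => h.symm) tendsto_const_nhds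
    exact tendsto_nhds_unique hGlim hG0
  have hrhs : (∑ i, ((∑ j, e0 p j i * v i) - (1-u) * ∑ j, e0 p i j * v j) *
        deriv (fun δ => ∑ x, π δ x * (if x i = y then (1:ℝ) else 0)) 0)
      = -(∑ i, c i * deriv (fun δ => ∑ x, π δ x * (if x i = y then (1:ℝ) else 0)) 0) := by
    rw [← Finset.sum_neg_distrib]
    refine Finset.sum_congr rfl fun i _ => ?_
    simp only [hc]
    ring
  rw [hrhs]
  linarith [key]

end SCT
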